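/- Let d ∈ ℕ and let a₁, a₂ : I → 𝒜_d be functions such that for k = 1,2: ρ(i) = ρ(i′) implies a_k(i) = a_k(i′) for all i, i′ ∈ I, and the subgroup of 𝒜_d generated by {a_k(i) : i ∈ I} acts transitively on Y_d. Consider the skew-product endomorphisms T̄_k(x,y) = (T_ρ x, a_k(x₁)⁻¹ y) on (X_ρ × Y_d, m_ρ × uniform), k = 1,2 (the Markov shifts of the d-extensions Ī_{a₁}, Ī_{a₂} of the Bernoulli graph). Then T̄₁ and T̄₂ are isomorphic mod 0 if and only if a₁ and a₂ are conjugate in 𝒜_d, i.e. there exists w₀ ∈ 𝒜_d with a₂(i)·w₀ = w₀·a₁(i) for all i ∈ I. -/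

import Mathlib

open MeasureTheory
open scoped ENNReal Classical

namespace OneSidedMarkov

noncomputable section

/-- The canonical σ-algebra on a sequence space over a (countable) alphabet:
the product of the discrete σ-algebras on the coordinates. -/
instance seqMS (E : Type*) : MeasurableSpace (ℕ → E) :=
  @MeasurableSpace.pi ℕ (fun _ => E) fun _ => ⊤

/-- Measurability of a map into a (countable) set carrying the discrete σ-algebra. -/
def DMeasurable {X : Type*} [MeasurableSpace X] {A : Type*} (f : X → A) : Prop :=
  ∀ a : A, MeasurableSet (f ⁻¹' {a})

/-- The cylinder set determined by a finite word. -/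
def cyl {E : Type*} {n : ℕ} (g : Fin n → E) : Set (ℕ → E) :=
  {x | ∀ k : Fin n, x (k : ℕ) = g k}

/-- The one-sided shift on a sequence space. -/
def shift {E : Type*} (x : ℕ → E) : ℕ → E := fun n => x (n + 1)

/-- `ρ` is a strictly positive probability vector. -/
def IsProbVector {I : Type*} (ρ : I → ℝ≥0∞) : Prop :=
  (∀ i, 0 < ρ i) ∧ ∑' i, ρ i = 1

/-- `μ` is the Bernoulli (product) measure with marginal `ρ`. -/
def IsProductMeasure {I : Type*} (ρ : I → ℝ≥0∞) (μ : Measure (ℕ → I)) : Prop :=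
  IsProbabilityMeasure μ ∧ ∀ (n : ℕ) (w : Fin n → I), μ (cyl w) = ∏ k, ρ (w k)

/-- Isomorphism mod 0 of two measure-preserving systems: a measure-preserving map,
invertible after discarding null sets, intertwining the transformations a.e. -/
def IsomorphicMod0 {X Y : Type*} [MeasurableSpace X] [MeasurableSpace Y]
    (μ : Measure X) (T : X → X) (ν : Measure Y) (S : Y → Y) : Prop :=
  ∃ Φ : X → Y, MeasurePreserving Φ μ ν ∧ (∀ᵐ x ∂μ, Φ (T x) = S (Φ x)) ∧
    ∃ Ψ : Y → X, MeasurePreserving Ψ ν μ ∧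
      (∀ᵐ x ∂μ, Ψ (Φ x) = x) ∧ ∀ᵐ y ∂ν, Φ (Ψ y) = y

/-! ### Stochastic graphs -/

/-- The data of a weighted directed graph: edge set `E`, vertex set `V`,
source and target maps, and weights on edges. -/
structure PreGraph (E V : Type*) where
  s : E → V
  t : E → V
  p : E → ℝ≥0∞

variable {E V F W : Type*}

namespace PreGraph

/-- A weighted directed graph is stochastic if weights are positive, the weights of the
edges starting at any given vertex sum to `1`, and every vertex has an outgoing and
an incoming edge. -/
def IsStochastic (G : PreGraph E V) : Prop :=
  (∀ g, 0 < G.p g) ∧ (∀ u : V, ∑' g : {g : E // G.s g = u}, G.p g.1 = 1) ∧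
    (∀ u : V, ∃ g, G.s g = u) ∧ ∀ v : V, ∃ g, G.t g = v

/-- `p0` is a stationary probability on the vertices of `G`. -/
def IsStationary (G : PreGraph E V) (p0 : V → ℝ≥0∞) : Prop :=
  (∀ u, 0 < p0 u) ∧ ∑' u, p0 u = 1 ∧
    ∀ v : V, ∑' g : {g : E // G.t g = v}, G.p g.1 * p0 (G.s g.1) = p0 v

/-- `G` is positively recurrent iff a stationary probability exists. -/
def PositivelyRecurrent (G : PreGraph E V) : Prop := ∃ p0, G.IsStationary p0

/-- One-step reachability along a directed edge. -/
def Step (G : PreGraph E V) (u v : V) : Prop := ∃ g, G.s g = u ∧ G.t g = v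

/-- `G` is irreducible: any ordered pair of vertices is joined by a finite directed path. -/
protected def Irreducible (G : PreGraph E V) : Prop :=
  ∀ u v : V, Relation.ReflTransGen G.Step u v

/-- The (backward) path condition for finite words of edges:
`s (g k) = t (g (k+1))` for consecutive indices. -/
def IsPathW (G : PreGraph E V) {n : ℕ} (g : Fin n → E) : Prop :=
  ∀ (k : ℕ) (h : k + 1 < n), G.s (g ⟨k, Nat.lt_of_succ_lt h⟩) = G.t (g ⟨k + 1, h⟩)

/-- The set of admissible one-sided infinite (backward) paths. -/
def PathSet (G : PreGraph E V) : Set (ℕ → E) := {x | ∀ n, G.s (x n) = G.t (x (n + 1))}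

/-- `m` is the stationary Markov measure of `(G, p0)`, characterized by its values on
cylinder sets: the cylinder over a backward path `g₁ … gₙ` has mass
`p g₁ ⋯ p gₙ · p0 (s gₙ)`, and cylinders over non-paths are null. -/
def IsMarkovMeasure (G : PreGraph E V) (p0 : V → ℝ≥0∞) (m : Measure (ℕ → E)) : Prop :=
  IsProbabilityMeasure m ∧
    ∀ (n : ℕ) (g : Fin (n + 1) → E),
      m (cyl g) =
        if G.IsPathW g then (∏ k, G.p (g k)) * p0 (G.s (g (Fin.last n))) else 0

end PreGraph

/-- A (weight-preserving, deterministic) homomorphism of weighted directed graphs. -/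
structure GraphHom (G : PreGraph E V) (H : PreGraph F W) where
  toFun : E → F
  vFun : V → W
  map_s : ∀ g, H.s (toFun g) = vFun (G.s g)
  map_t : ∀ g, H.t (toFun g) = vFun (G.t g)
  map_p : ∀ g, H.p (toFun g) = G.p g
  v_surj : Function.Surjective vFun
  deterministic : ∀ (u : V) (h : F), H.s h = vFun u → ∃! g : E, G.s g = u ∧ toFun g = h

namespace GraphHom

variable {G : PreGraph E V} {H : PreGraph F W}

/-- The factor map induced on path spaces by a graph homomorphism. -/
def pathMap (φ : GraphHom G H) (x : ℕ → E) : ℕ → F := fun n => φ.toFun (x n)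

/-- `φ` has degree `d` (with respect to the Markov measure `m` on the source):
almost every fiber of the induced factor map, within the path space, has exactly
`d` elements. -/
def HasDegree (φ : GraphHom G H) (m : Measure (ℕ → E)) (d : ℕ) : Prop :=
  ∀ᵐ x ∂m, (G.PathSet ∩ φ.pathMap ⁻¹' {φ.pathMap x}).Finite ∧
    (G.PathSet ∩ φ.pathMap ⁻¹' {φ.pathMap x}).ncard = d

/-- A homomorphism is an isomorphism of graphs if it is bijective on edges and
on vertices. -/
def IsIso (φ : GraphHom G H) : Prop :=
  Function.Bijective φ.toFun ∧ Function.Bijective φ.vFun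

end GraphHom

/-- The standard Bernoulli graph: a single vertex, edge set `I` with weights `ρ`. -/
def bernoulliGraph {I : Type*} (ρ : I → ℝ≥0∞) : PreGraph I Unit :=
  ⟨fun _ => (), fun _ => (), ρ⟩

/-- The graph skew product `H̄ₐ` of `H` by a function `a` into the permutations of
`Fin d`. -/
def gsp (H : PreGraph F W) {d : ℕ} (a : F → Equiv.Perm (Fin d)) :
    PreGraph (F × Fin d) (W × Fin d) where
  s := fun hy => (H.s hy.1, hy.2)
  t := fun hy => (H.t hy.1, a hy.1 hy.2)
  p := fun hy => H.p hy.1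

/-- Two functions `a₁ a₂ : H → 𝒜_d` are cohomologous with respect to `H`. -/
def Cohomologous (H : PreGraph F W) {d : ℕ} (a₁ a₂ : F → Equiv.Perm (Fin d)) : Prop :=
  ∃ w : W → Equiv.Perm (Fin d), ∀ h, a₂ h * w (H.s h) = w (H.t h) * a₁ h

/-- The map `fᵢ : G⁰ → G⁰` induced by a homomorphism onto the Bernoulli graph:
`fᵢ u` is the target of the unique edge starting at `u` sent to `i`. -/
def GraphHom.fmap {I : Type*} {G : PreGraph E V} {ρ : I → ℝ≥0∞}
    (φ : GraphHom G (bernoulliGraph ρ)) (i : I) (u : V) : V :=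
  G.t (φ.deterministic u i (Subsingleton.elim _ _)).exists.choose

/-- Composite of the maps determined by a finite word. -/
def compWord {U I : Type*} (f : I → U → U) {n : ℕ} (w : Fin n → I) : U → U :=
  (List.ofFn fun k => f (w k)).foldr (· ∘ ·) id

/-- The semigroup (set of all nonempty finite composites) generated by a family of
self-maps. -/
def genSem {U I : Type*} (f : I → U → U) : Set (U → U) :=
  {g | ∃ (n : ℕ) (w : Fin (n + 1) → I), g = compWord f w}

/-- `L` is a persistent `d`-set for the semigroup `S` of self-maps of `U`. -/
def PersistentSet {U : Type*} (S : Set (U → U)) (d : ℕ) (L : Set U) : Prop :=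
  L.Finite ∧ L.ncard = d ∧ (∀ f ∈ S, (f '' L).ncard = d) ∧
    ∀ A : Set U, A.Finite → ∃ f ∈ S, f '' A ⊆ L

/-- The semigroup `S` is `d`-contractive. -/
def IsDContractive {U : Type*} (S : Set (U → U)) (d : ℕ) : Prop :=
  ∃ L, PersistentSet S d L

/-- The itinerary (canonical factor) map of an endomorphism `T` relative to `δ`. -/
def itin {X I : Type*} (T : X → X) (δ : X → I) (x : X) : ℕ → I := fun n => δ (T^[n] x)

/-- `δ ∈ Δ_ρ(T)`: `δ` has law `ρ`, the σ-algebra generated by `δ` is independent of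
`T⁻¹𝓑`, and together they generate the whole σ-algebra modulo null sets. -/
def IsUniformGenerator {X : Type*} [mX : MeasurableSpace X] {I : Type*} (ρ : I → ℝ≥0∞)
    (m : Measure X) (T : X → X) (δ : X → I) : Prop :=
  DMeasurable δ ∧ (∀ i, m (δ ⁻¹' {i}) = ρ i) ∧
    ProbabilityTheory.Indep (MeasurableSpace.comap δ ⊤) (mX.comap T) m ∧
    ∀ A : Set X, MeasurableSet A →
      ∃ B : Set X, MeasurableSet[MeasurableSpace.comap δ ⊤ ⊔ mX.comap T] B ∧
        m (symmDiff A B) = 0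

/-- The fibers of `Φ` have cardinality `d ∈ ℕ∞` almost everywhere. -/
def HasFiberCard {X : Type*} [MeasurableSpace X] {I : Type*} (m : Measure X)
    (Φ : X → ℕ → I) (d : ℕ∞) : Prop :=
  ∀ᵐ x ∂m, (Φ ⁻¹' {Φ x}).encard = d

/-- `d` is the minimal index `d(T)` of the `ρ`-uniform endomorphism `T`. -/
def HasMinimalIndex {X : Type*} [MeasurableSpace X] {I : Type*} (ρ : I → ℝ≥0∞)
    (m : Measure X) (T : X → X) (d : ℕ∞) : Prop :=
  (∃ δ : X → I, IsUniformGenerator ρ m T δ ∧ HasFiberCard m (itin T δ) d) ∧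
    ∀ (δ : X → I) (d' : ℕ∞),
      IsUniformGenerator ρ m T δ → HasFiberCard m (itin T δ) d' → d ≤ d'

/-- The uniform probability measure on `Fin d`. -/
def unif (d : ℕ) : Measure (Fin d) := (d : ℝ≥0∞)⁻¹ • Measure.count

/-- The `n`-stringing graph `G⁽ⁿ⁾`: edges are the backward paths of length `n+1`,
vertices the backward paths of length `n`. -/
def stringing (G : PreGraph E V) (n : ℕ) :
    PreGraph {g : Fin (n + 1) → E // G.IsPathW g} {g : Fin n → E // G.IsPathW g} where
  s := fun g => ⟨fun k => g.1 k.succ, fun k h => g.2 (k + 1) (Nat.succ_lt_succ h)⟩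
  t := fun g => ⟨fun k => g.1 k.castSucc, fun k h => g.2 k (Nat.lt_succ_of_lt h)⟩
  p := fun g => ∏ k, G.p (g.1 k)

/-- A `(π,ψ)`-extension in `Ext^d(I,ρ)`: a graph skew product `d`-extension
`H̄ₐ → H` of a positively recurrent graph `H` admitting a degree-one homomorphism
`ψ : H → I` onto the Bernoulli graph, with `H̄ₐ` irreducible. -/
structure PiPsiExt (I : Type) (ρ : I → ℝ≥0∞) (d : ℕ) where
  F : Type
  W : Type
  countF : Countable F
  countW : Countable W
  H : PreGraph F W
  stoch : H.IsStochastic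
  a : F → Equiv.Perm (Fin d)
  ψ : GraphHom H (bernoulliGraph ρ)
  p0 : W → ℝ≥0∞
  stat : H.IsStationary p0
  m : Measure (ℕ → F)
  markov : H.IsMarkovMeasure p0 m
  deg1 : ψ.HasDegree m 1
  irr : (gsp H a).Irreducible

/-- The partial order on `Ext^d(I,ρ)`: `P₁ ≼ P` via homomorphisms `κ, κ̄` making the
diagram commute, with `a₁ ∘ κ` cohomologous to `a`. -/
def ExtLE {I : Type} {ρ : I → ℝ≥0∞} {d : ℕ} (P₁ P : PiPsiExt I ρ d) : Prop :=
  ∃ (κ : GraphHom P.H P₁.H) (κb : GraphHom (gsp P.H P.a) (gsp P₁.H P₁.a)),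
    (∀ g : P.F × Fin d, (κb.toFun g).1 = κ.toFun g.1) ∧
    (∀ g : P.F, P.ψ.toFun g = P₁.ψ.toFun (κ.toFun g)) ∧
    Cohomologous P.H P.a (fun h => P₁.a (κ.toFun h))

/-- Equivalence of `(π,ψ)`-extensions: as `ExtLE` but with `κ, κ̄` isomorphisms. -/
def ExtEquiv {I : Type} {ρ : I → ℝ≥0∞} {d : ℕ} (P₁ P : PiPsiExt I ρ d) : Prop :=
  ∃ (κ : GraphHom P.H P₁.H) (κb : GraphHom (gsp P.H P.a) (gsp P₁.H P₁.a)),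
    κ.IsIso ∧ κb.IsIso ∧
    (∀ g : P.F × Fin d, (κb.toFun g).1 = κ.toFun g.1) ∧
    (∀ g : P.F, P.ψ.toFun g = P₁.ψ.toFun (κ.toFun g)) ∧
    Cohomologous P.H P.a (fun h => P₁.a (κ.toFun h))

/-- An irreducible element of `(Ext^d(I,ρ), ≼)`. -/
def ExtIrreducible {I : Type} {ρ : I → ℝ≥0∞} {d : ℕ} (P : PiPsiExt I ρ d) : Prop :=
  ∀ P₁ : PiPsiExt I ρ d, ExtLE P₁ P → ExtEquiv P₁ P

end

end OneSidedMarkov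

namespace OneSidedMarkov

open MeasureTheory
open scoped ENNReal

/-- The skew product endomorphism `T̄(x,y) = (T_ρ x, a(x₁)⁻¹ y)` on `X_ρ × Y_d`. -/
def bernSkew {I : Type*} {d : ℕ} (a : I → Equiv.Perm (Fin d))
    (q : (ℕ → I) × Fin d) : (ℕ → I) × Fin d :=
  (shift q.1, (a (q.1 0))⁻¹ q.2)


set_option linter.unusedSectionVars false
set_option linter.unusedVariables false

section AuxHelpers

lemma Equiv.Perm.inv_apply_self {α : Type*} (e : Equiv.Perm α) (x : α) : e⁻¹ (e x) = x :=
  e.symm_apply_apply x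

lemma Equiv.Perm.apply_inv_self {α : Type*} (e : Equiv.Perm α) (x : α) : e (e⁻¹ x) = x :=
  e.apply_symm_apply x

/-- helper : pull back an a.e. property through a measure preserving map -/
lemma ae_comp {α β : Type*} [MeasurableSpace α] [MeasurableSpace β] {μ : Measure α}
    {ν : Measure β} {f : α → β} (hf : MeasurePreserving f μ ν) {p : β → Prop}
    (h : ∀ᵐ y ∂ν, p y) : ∀ᵐ x ∂μ, p (f x) := by
  rw [MeasureTheory.ae_iff] at h ⊢
  obtain ⟨N, hsub, hNm, hN0⟩ := exists_measurable_superset_of_null h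
  have : {x | ¬ p (f x)} ⊆ f ⁻¹' N := fun x hx => hsub hx
  refine le_antisymm (le_trans (measure_mono this) ?_) zero_le
  rw [← hf.map_eq, Measure.map_apply hf.measurable hNm] at hN0
  exact hN0.le

/-- helper : extract a measurable conull set from an a.e. property -/
lemma exists_conull {α : Type*} [MeasurableSpace α] {μ : Measure α} {p : α → Prop}
    (h : ∀ᵐ x ∂μ, p x) : ∃ E : Set α, MeasurableSet E ∧ μ Eᶜ = 0 ∧ ∀ x ∈ E, p x := by
  rw [MeasureTheory.ae_iff] at h
  obtain ⟨N, hsub, hNm, hN0⟩ := exists_measurable_superset_of_null h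
  refine ⟨Nᶜ, hNm.compl, by rwa [compl_compl], fun x hx => ?_⟩
  by_contra hc
  exact hx (hsub hc)

/-- helper : intersecting with a conull set does not change the measure -/
lemma measure_inter_conull' {α : Type*} [MeasurableSpace α] {μ : Measure α} {A G : Set α}
    (hG : μ Gᶜ = 0) : μ (A ∩ G) = μ A := by
  apply le_antisymm (measure_mono Set.inter_subset_left)
  calc μ A ≤ μ ((A ∩ G) ∪ (A ∩ Gᶜ)) := by
        apply measure_mono
        intro x hx
        by_cases h : x ∈ G
        · exact Or.inl ⟨hx, h⟩
        · exact Or.inr ⟨hx, h⟩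
    _ ≤ μ (A ∩ G) + μ (A ∩ Gᶜ) := measure_union_le _ _
    _ ≤ μ (A ∩ G) + 0 := by
        gcongr
        exact le_trans (measure_mono Set.inter_subset_right) hG.le
    _ = μ (A ∩ G) := add_zero _

end AuxHelpers

set_option linter.unusedSectionVars false
set_option linter.unusedVariables false

noncomputable section Aux
variable {I : Type} [Countable I]

lemma cyl_zero_eq (g : Fin 0 → I) : cyl g = (Set.univ : Set (ℕ → I)) := by
  ext x; simp [cyl]

/-- truncation to the first `n` coordinates -/
def trunc (n : ℕ) (x : ℕ → I) : Fin n → I := fun k => x (k : ℕ)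

lemma cyl_eq_trunc {n : ℕ} (g : Fin n → I) : cyl g = trunc n ⁻¹' {g} := by
  ext x
  simp only [cyl, Set.mem_setOf_eq, Set.mem_preimage, Set.mem_singleton_iff, funext_iff, trunc]

lemma trunc_preimage_eq_iUnion {n : ℕ} (S : Set (Fin n → I)) :
    trunc n ⁻¹' S = ⋃ w ∈ S, cyl w := by
  ext x
  simp only [Set.mem_preimage, Set.mem_iUnion, cyl_eq_trunc]
  exact ⟨fun h => ⟨trunc n x, h, rfl⟩, by rintro ⟨w, hw, rfl⟩; exact hw⟩

/-- the collection of cylinder sets -/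
def CylSets (I : Type) : Set (Set (ℕ → I)) := {S | ∃ (n : ℕ) (g : Fin n → I), S = cyl g}

lemma univ_mem_cylSets : (Set.univ : Set (ℕ → I)) ∈ CylSets I := by
  refine ⟨0, Fin.elim0, ?_⟩
  ext x; simp [cyl]

lemma measurableSet_cyl {n : ℕ} (g : Fin n → I) : MeasurableSet (cyl g) := by
  letI : MeasurableSpace I := ⊤
  have : cyl g = ⋂ k : Fin n, (fun x : ℕ → I => x (k : ℕ)) ⁻¹' {g k} := by
    ext x; simp [cyl]
  rw [this]
  exact MeasurableSet.iInter fun k => (measurable_pi_apply (k : ℕ)) (by trivial)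

lemma measurableSet_trunc_preimage {n : ℕ} (S : Set (Fin n → I)) :
    MeasurableSet (trunc n ⁻¹' S) := by
  rw [trunc_preimage_eq_iUnion]
  exact MeasurableSet.biUnion (Set.to_countable S) fun w _ => measurableSet_cyl w

lemma isPiSystem_cylSets : IsPiSystem (CylSets I) := by
  rintro S ⟨n, g, rfl⟩ T ⟨m, g', rfl⟩ hne
  rcases le_total n m with h | h
  · have key : cyl g ∩ cyl g' = cyl g' := by
      obtain ⟨z, hz1, hz2⟩ := hne
      apply Set.inter_eq_self_of_subset_right
      intro x hx k
      have lt : (k : ℕ) < m := lt_of_lt_of_le k.2 h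
      have e1 : x (k : ℕ) = g' ⟨(k : ℕ), lt⟩ := hx ⟨(k : ℕ), lt⟩
      have e2 : z (k : ℕ) = g' ⟨(k : ℕ), lt⟩ := hz2 ⟨(k : ℕ), lt⟩
      have e3 : z (k : ℕ) = g k := hz1 k
      rw [e1, ← e2, e3]
    rw [key]; exact ⟨m, g', rfl⟩
  · have key : cyl g ∩ cyl g' = cyl g := by
      obtain ⟨z, hz1, hz2⟩ := hne
      apply Set.inter_eq_self_of_subset_left
      intro x hx k
      have lt : (k : ℕ) < n := lt_of_lt_of_le k.2 h
      have e1 : x (k : ℕ) = g ⟨(k : ℕ), lt⟩ := hx ⟨(k : ℕ), lt⟩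
      have e2 : z (k : ℕ) = g ⟨(k : ℕ), lt⟩ := hz1 ⟨(k : ℕ), lt⟩
      have e3 : z (k : ℕ) = g' k := hz2 k
      rw [e1, ← e2, e3]
    rw [key]; exact ⟨n, g, rfl⟩

lemma seqMS_eq_generateFrom : (seqMS I) = MeasurableSpace.generateFrom (CylSets I) := by
  apply le_antisymm
  · rw [show (seqMS I) = @MeasurableSpace.pi ℕ (fun _ => I) (fun _ => ⊤) from rfl]
    refine iSup_le fun k => ?_
    intro s hs
    rw [MeasurableSpace.measurableSet_comap] at hs
    obtain ⟨s', -, rfl⟩ := hs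
    have : (fun x : ℕ → I => x k) ⁻¹' s' =
        trunc (k + 1) ⁻¹' {w : Fin (k+1) → I | w ⟨k, Nat.lt_succ_self k⟩ ∈ s'} := by
      ext x; simp [trunc]
    rw [this, trunc_preimage_eq_iUnion]
    exact MeasurableSet.biUnion (Set.to_countable _)
      fun w _ => MeasurableSpace.measurableSet_generateFrom ⟨k + 1, w, rfl⟩
  · exact MeasurableSpace.generateFrom_le (by rintro S ⟨n, g, rfl⟩; exact measurableSet_cyl g)

/-- finite measures on the sequence space agreeing on cylinders agree -/
lemma measure_ext_cyl {μ ν : Measure (ℕ → I)} [IsFiniteMeasure μ]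
    (h : ∀ (n : ℕ) (g : Fin n → I), μ (cyl g) = ν (cyl g)) : μ = ν := by
  refine ext_of_generate_finite (CylSets I) seqMS_eq_generateFrom isPiSystem_cylSets
    (by rintro S ⟨n, g, rfl⟩; exact h n g) ?_
  have hu : (Set.univ : Set (ℕ → I)) = cyl (Fin.elim0 : Fin 0 → I) := by ext x; simp [cyl]
  rw [hu]; exact h 0 _

section
variable {ρ : I → ℝ≥0∞} {μ : Measure (ℕ → I)}

lemma measurable_shift : Measurable (shift : (ℕ → I) → (ℕ → I)) := by
  letI : MeasurableSpace I := ⊤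
  exact measurable_pi_lambda _ fun n => measurable_pi_apply (n + 1)

lemma shift_iterate_apply (n : ℕ) (x : ℕ → I) (k : ℕ) : shift^[n] x k = x (n + k) := by
  induction n generalizing x with
  | zero => simp
  | succ n ih =>
    rw [Function.iterate_succ_apply, ih]
    simp [shift, Nat.succ_add, Nat.add_comm, Nat.add_assoc, Nat.add_left_comm]

lemma cyl_inter_shift_preimage {n m : ℕ} (w : Fin n → I) (v : Fin m → I) :
    cyl w ∩ shift^[n] ⁻¹' (cyl v) = cyl (Fin.append w v) := by
  ext x
  constructor
  · rintro ⟨h1, h2⟩ k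
    refine Fin.addCases (fun k0 => ?_) (fun k0 => ?_) k
    · rw [Fin.append_left]
      simpa using h1 k0
    · rw [Fin.append_right]
      have := h2 k0
      rw [shift_iterate_apply] at this
      simpa using this
  · intro h
    constructor
    · intro k
      have := h (Fin.castAdd m k)
      rwa [Fin.append_left, Fin.coe_castAdd] at this
    · intro k
      have := h (Fin.natAdd n k)
      rw [Fin.append_right, Fin.coe_natAdd] at this
      show shift^[n] x (k : ℕ) = v k
      rwa [shift_iterate_apply]

variable {ρ : I → ℝ≥0∞} {μ : Measure (ℕ → I)}

lemma prod_append {n m : ℕ} (w : Fin n → I) (v : Fin m → I) :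
    (∏ k, ρ (Fin.append w v k)) = (∏ k, ρ (w k)) * ∏ k, ρ (v k) := by
  rw [Fin.prod_univ_add]
  congr 1
  · exact Finset.prod_congr rfl fun k _ => by rw [Fin.append_left]
  · exact Finset.prod_congr rfl fun k _ => by rw [Fin.append_right]

/-- key independence identity -/
lemma measure_cyl_inter_shift (hμ : IsProductMeasure ρ μ) {n : ℕ} (w : Fin n → I)
    {E : Set (ℕ → I)} (hE : MeasurableSet E) :
    μ (cyl w ∩ shift^[n] ⁻¹' E) = μ (cyl w) * μ E := by
  haveI := hμ.1
  set ν₁ : Measure (ℕ → I) := (μ.restrict (cyl w)).map (shift^[n]) with hν₁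
  have hmeas : Measurable (shift^[n] : (ℕ → I) → ℕ → I) := measurable_shift.iterate n
  have happ : ∀ {E : Set (ℕ → I)}, MeasurableSet E → ν₁ E = μ (cyl w ∩ shift^[n] ⁻¹' E) := by
    intro E hE
    rw [hν₁, Measure.map_apply hmeas hE, Measure.restrict_apply (hmeas hE), Set.inter_comm]
  haveI : IsFiniteMeasure ν₁ := by
    constructor
    rw [happ MeasurableSet.univ]
    exact lt_of_le_of_lt (measure_mono (Set.inter_subset_left)) (measure_lt_top μ _)
  have key : ν₁ = μ (cyl w) • μ := by
    apply measure_ext_cyl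
    intro m v
    rw [happ (measurableSet_cyl v), cyl_inter_shift_preimage, hμ.2, prod_append,
      ← hμ.2 n w, ← hμ.2 m v]
    simp
  calc μ (cyl w ∩ shift^[n] ⁻¹' E) = ν₁ E := (happ hE).symm
    _ = μ (cyl w) * μ E := by rw [key]; simp

lemma cyl_one_eq (i : I) : cyl (fun _ : Fin 1 => i) = {x : ℕ → I | x 0 = i} := by
  ext x
  constructor
  · intro h; exact h 0
  · intro h k
    have : (k : ℕ) = 0 := by omega
    rw [this]; exact h

lemma measure_cyl_one (hμ : IsProductMeasure ρ μ) (i : I) : μ {x : ℕ → I | x 0 = i} = ρ i := by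
  rw [← cyl_one_eq, hμ.2]; simp

lemma iUnion_cyl_one : (⋃ i : I, {x : ℕ → I | x 0 = i}) = Set.univ := by
  ext x; simp

lemma measurableSet_zero (i : I) : MeasurableSet {x : ℕ → I | x 0 = i} := by
  rw [← cyl_one_eq]; exact measurableSet_cyl _

lemma measure_shift_preimage (hρ : IsProbVector ρ) (hμ : IsProductMeasure ρ μ)
    {E : Set (ℕ → I)} (hE : MeasurableSet E) : μ (shift ⁻¹' E) = μ E := by
  have hdec : shift ⁻¹' E = ⋃ i : I, ({x : ℕ → I | x 0 = i} ∩ shift ⁻¹' E) := by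
    rw [← Set.iUnion_inter, iUnion_cyl_one, Set.univ_inter]
  rw [hdec, measure_iUnion]
  · have : ∀ i : I, μ ({x : ℕ → I | x 0 = i} ∩ shift ⁻¹' E) = ρ i * μ E := by
      intro i
      have h1 := measure_cyl_inter_shift hμ (fun _ : Fin 1 => i) hE
      rw [Function.iterate_one] at h1
      rw [← cyl_one_eq, h1, hμ.2]
      simp
    simp_rw [this]
    rw [ENNReal.tsum_mul_right, hρ.2, one_mul]
  · intro i j hij
    simp only [Function.onFun]
    apply Set.disjoint_left.2
    rintro x ⟨hx1, -⟩ ⟨hx2, -⟩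
    exact hij (hx1.symm.trans hx2)
  · exact fun i => (measurableSet_zero i).inter (measurable_shift hE)

lemma shift_measurePreserving (hρ : IsProbVector ρ) (hμ : IsProductMeasure ρ μ) :
    MeasurePreserving (shift : (ℕ → I) → ℕ → I) μ μ := by
  refine ⟨measurable_shift, Measure.ext fun E hE => ?_⟩
  rw [Measure.map_apply measurable_shift hE]
  exact measure_shift_preimage hρ hμ hE

def Approx (μ : Measure (ℕ → I)) (S : Set (ℕ → I)) : Prop :=
  MeasurableSet S ∧ ∀ ε : ℝ≥0∞, ε ≠ 0 →
    ∃ (n : ℕ) (W : Set (Fin n → I)), μ (symmDiff S (trunc n ⁻¹' W)) ≤ ε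

lemma trunc_preimage_mono_eq {n N : ℕ} (h : n ≤ N) (W : Set (Fin n → I)) :
    trunc n ⁻¹' W =
      trunc N ⁻¹' {w : Fin N → I | (fun k : Fin n => w ⟨(k : ℕ), lt_of_lt_of_le k.2 h⟩) ∈ W} := by
  ext x
  simp only [Set.mem_preimage, Set.mem_setOf_eq]
  have : (fun k : Fin n => trunc N x ⟨(k : ℕ), lt_of_lt_of_le k.2 h⟩) = trunc n x := rfl
  rw [this]

lemma approx_iUnion [IsFiniteMeasure μ] (f : ℕ → Set (ℕ → I)) (hf : ∀ k, Approx μ (f k)) :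
    Approx μ (⋃ k, f k) := by
  refine ⟨MeasurableSet.iUnion fun k => (hf k).1, fun ε hε => ?_⟩
  rcases eq_or_ne ε ⊤ with rfl | hεt
  · exact ⟨0, ∅, le_top⟩
  have hε2 : (ε / 2) ≠ 0 := by
    simp only [ne_eq, ENNReal.div_eq_zero_iff]
    push_neg
    exact ⟨hε, by norm_num⟩
  set S := ⋃ k, f k with hS
  -- step 1 : find K
  have hmono : Monotone (fun K : ℕ => ⋃ k ∈ Finset.range K, f k) := by
    intro a b hab x hx
    simp only [Set.mem_iUnion, Finset.mem_range] at hx ⊢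
    obtain ⟨k, hk, hxk⟩ := hx
    exact ⟨k, lt_of_lt_of_le hk hab, hxk⟩
  have hcup : (⋃ K : ℕ, ⋃ k ∈ Finset.range K, f k) = S := by
    apply Set.Subset.antisymm
    · exact Set.iUnion_subset fun K => Set.iUnion₂_subset fun k _ => Set.subset_iUnion f k
    · refine Set.iUnion_subset fun k => Set.subset_iUnion_of_subset (k + 1) ?_
      exact Set.subset_biUnion_of_mem (show k ∈ (Finset.range (k+1) : Finset ℕ) by
        simp [Finset.mem_range])
  have htend := tendsto_measure_iUnion_atTop (μ := μ) hmono
  rw [hcup] at htend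
  have hBmeas : ∀ K : ℕ, MeasurableSet (⋃ k ∈ Finset.range K, f k) := fun K =>
    MeasurableSet.biUnion (Finset.range K).countable_toSet fun k _ => (hf k).1
  have hK : ∃ K : ℕ, μ (S \ ⋃ k ∈ Finset.range K, f k) ≤ ε / 2 := by
    rcases eq_or_ne (μ S) 0 with h0 | h0
    · exact ⟨0, le_trans (le_trans (measure_mono Set.diff_subset) h0.le) zero_le⟩
    · have hlt : μ S - ε / 2 < μ S := ENNReal.sub_lt_self (measure_ne_top μ _) h0 hε2
      obtain ⟨K, hKlt⟩ := (htend.eventually_const_lt hlt).exists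
      refine ⟨K, ?_⟩
      have hdiff : μ (S \ ⋃ k ∈ Finset.range K, f k) =
          μ S - μ (⋃ k ∈ Finset.range K, f k) := by
        apply measure_diff _ (hBmeas K).nullMeasurableSet (measure_ne_top μ _)
        exact Set.iUnion₂_subset fun k _ => Set.subset_iUnion f k
      rw [hdiff, tsub_le_iff_right]
      calc μ S ≤ (μ S - ε / 2) + ε / 2 := le_tsub_add
        _ ≤ μ (⋃ k ∈ Finset.range K, f k) + ε / 2 := by gcongr; exact hKlt.le
        _ = ε / 2 + μ (⋃ k ∈ Finset.range K, f k) := add_comm _ _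
  obtain ⟨K, hKb⟩ := hK
  -- step 2 : approximants for k < K
  have hap : ∀ k, ∃ (n : ℕ) (W : Set (Fin n → I)),
      μ (symmDiff (f k) (trunc n ⁻¹' W)) ≤ ε / 2 / K := fun k =>
    (hf k).2 _ (by
      simp only [ne_eq, ENNReal.div_eq_zero_iff, not_or]
      exact ⟨⟨hε, by norm_num⟩, ENNReal.natCast_ne_top K⟩)
  choose nn WW hWW using hap
  set N := (Finset.range K).sup nn with hN
  have hnle : ∀ k ∈ Finset.range K, nn k ≤ N := fun k hk => Finset.le_sup hk
  -- rewrite each approximant at level N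
  set W' : ℕ → Set (Fin N → I) := fun k =>
    if h : k ∈ Finset.range K then
      {w : Fin N → I | (fun j : Fin (nn k) => w ⟨(j : ℕ), lt_of_lt_of_le j.2 (hnle k h)⟩) ∈ WW k}
    else ∅
  have hWeq : ∀ k ∈ Finset.range K, trunc (nn k) ⁻¹' (WW k) = trunc N ⁻¹' (W' k) := by
    intro k hk
    simp only [W', dif_pos hk]
    exact trunc_preimage_mono_eq (hnle k hk) (WW k)
  refine ⟨N, ⋃ k ∈ Finset.range K, W' k, ?_⟩
  have hA : trunc N ⁻¹' (⋃ k ∈ Finset.range K, W' k) =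
      ⋃ k ∈ Finset.range K, trunc (nn k) ⁻¹' (WW k) := by
    rw [Set.preimage_iUnion₂]
    exact Set.iUnion₂_congr fun k hk => (hWeq k hk).symm
  rw [hA]
  set A := ⋃ k ∈ Finset.range K, trunc (nn k) ⁻¹' (WW k) with hAdef
  -- step 3: inclusion
  have hincl : symmDiff S A ⊆
      (S \ ⋃ k ∈ Finset.range K, f k) ∪ ⋃ k ∈ Finset.range K, symmDiff (f k) (trunc (nn k) ⁻¹' (WW k)) := by
    intro x hx
    rcases hx with ⟨hxS, hxA⟩ | ⟨hxA, hxS⟩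
    · by_cases hb : x ∈ ⋃ k ∈ Finset.range K, f k
      · simp only [Set.mem_iUnion] at hb
        obtain ⟨k, hk, hxk⟩ := hb
        refine Or.inr (Set.mem_biUnion hk ?_)
        have : x ∉ trunc (nn k) ⁻¹' (WW k) := fun hc => hxA (Set.mem_biUnion hk hc)
        exact Or.inl ⟨hxk, this⟩
      · exact Or.inl ⟨hxS, hb⟩
    · simp only [hAdef, Set.mem_iUnion] at hxA
      obtain ⟨k, hk, hxk⟩ := hxA
      refine Or.inr (Set.mem_biUnion hk ?_)
      have : x ∉ f k := fun hc => hxS (Set.mem_iUnion.2 ⟨k, hc⟩)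
      exact Or.inr ⟨hxk, this⟩
  calc μ (symmDiff S A) ≤
      μ ((S \ ⋃ k ∈ Finset.range K, f k) ∪
        ⋃ k ∈ Finset.range K, symmDiff (f k) (trunc (nn k) ⁻¹' (WW k))) := measure_mono hincl
    _ ≤ μ (S \ ⋃ k ∈ Finset.range K, f k) +
        μ (⋃ k ∈ Finset.range K, symmDiff (f k) (trunc (nn k) ⁻¹' (WW k))) := measure_union_le _ _
    _ ≤ ε / 2 + ∑ k ∈ Finset.range K, μ (symmDiff (f k) (trunc (nn k) ⁻¹' (WW k))) := by
        gcongr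
        exact measure_biUnion_finset_le _ _
    _ ≤ ε / 2 + ∑ _k ∈ Finset.range K, ε / 2 / K := by
        gcongr with k hk
        exact hWW k
    _ ≤ ε / 2 + ε / 2 := by
        gcongr
        rw [Finset.sum_const, Finset.card_range, nsmul_eq_mul]
        exact ENNReal.mul_div_le
    _ = ε := ENNReal.add_halves ε

lemma approx_of_measurable [IsFiniteMeasure μ] {S : Set (ℕ → I)} (hS : MeasurableSet S) :
    Approx μ S := by
  let G : MeasurableSpace (ℕ → I) :=
    { MeasurableSet' := Approx μ
      measurableSet_empty := ⟨MeasurableSet.empty, fun ε _ => ⟨0, ∅, by simp⟩⟩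
      measurableSet_compl := by
        rintro S ⟨hSm, hSa⟩
        refine ⟨hSm.compl, fun ε hε => ?_⟩
        obtain ⟨n, W, hW⟩ := hSa ε hε
        refine ⟨n, Wᶜ, ?_⟩
        rw [Set.preimage_compl, compl_symmDiff_compl]
        exact hW
      measurableSet_iUnion := approx_iUnion }
  have hle : (seqMS I) ≤ G := by
    rw [seqMS_eq_generateFrom]
    apply MeasurableSpace.generateFrom_le
    rintro T ⟨n, g, rfl⟩
    refine ⟨measurableSet_cyl g, fun ε _ => ⟨n, {g}, ?_⟩⟩
    rw [cyl_eq_trunc, symmDiff_self]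
    simp
  exact hle S hS

end

lemma instMSC_top {α : Type*} : @MeasurableSingletonClass α ⊤ :=
  @MeasurableSingletonClass.mk α ⊤ (fun _ => trivial)

lemma unif_singleton {d : ℕ} (y : Fin d) : unif d {y} = (d : ℝ≥0∞)⁻¹ := by
  simp [unif, Measure.count_singleton]

lemma unif_univ {d : ℕ} (hd : d ≠ 0) : unif d Set.univ = 1 := by
  simp only [unif, Measure.smul_apply, Measure.count_univ, smul_eq_mul]
  rw [ENat.card_eq_coe_fintype_card, Fintype.card_fin, ENat.toENNReal_coe]
  exact ENNReal.inv_mul_cancel (by exact_mod_cast hd) (ENNReal.natCast_ne_top d)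

lemma unif_isProb {d : ℕ} (hd : d ≠ 0) : IsProbabilityMeasure (unif d) :=
  ⟨unif_univ hd⟩

lemma unif_preimage_perm {d : ℕ} (e : Equiv.Perm (Fin d)) (T : Set (Fin d)) :
    unif d (⇑e ⁻¹' T) = unif d T := by
  simp only [unif, Measure.smul_apply]
  congr 1
  rw [Measure.count_apply_finite _ (Set.toFinite _), Measure.count_apply_finite _ (Set.toFinite _)]
  norm_cast
  rw [← Set.ncard_eq_toFinset_card _ (Set.toFinite _), ← Set.ncard_eq_toFinset_card _ (Set.toFinite _)]
  have : ⇑e ⁻¹' T = ⇑e.symm '' T := by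
    ext z; simp [Equiv.symm_apply_eq, eq_comm]
  rw [this, Set.ncard_image_of_injective T e.symm.injective]

lemma unif_singleton_ne_zero {d : ℕ} (hd : d ≠ 0) (y : Fin d) : unif d {y} ≠ 0 := by
  rw [unif_singleton]
  simp [ENNReal.natCast_ne_top d]

/-- a.e. with respect to `unif d` implies everywhere -/
lemma unif_ae_all {d : ℕ} (hd : d ≠ 0) {p : Fin d → Prop} (h : ∀ᵐ y ∂(unif d), p y) :
    ∀ y, p y := by
  intro y
  by_contra hc
  have h1 : unif d {z | ¬ p z} = 0 := h
  have h2 : ({y} : Set (Fin d)) ⊆ {z | ¬ p z} := by simp [hc]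
  exact unif_singleton_ne_zero hd y (le_antisymm (le_trans (measure_mono h2) h1.le) zero_le)

/-! ### product space -/

def RectSets (I : Type) (d : ℕ) : Set (Set ((ℕ → I) × Fin d)) :=
  Set.image2 (· ×ˢ ·) (CylSets I) (Set.univ : Set (Set (Fin d)))

lemma prodMS_eq_generateFrom (d : ℕ) :
    (inferInstance : MeasurableSpace ((ℕ → I) × Fin d)) =
      MeasurableSpace.generateFrom (RectSets I d) := by
  have hD : MeasurableSpace.generateFrom (Set.univ : Set (Set (Fin d))) =
      (inferInstance : MeasurableSpace (Fin d)) := by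
    apply le_antisymm
    · exact MeasurableSpace.generateFrom_le fun s _ => trivial
    · intro s _
      exact MeasurableSpace.measurableSet_generateFrom trivial
  exact (generateFrom_eq_prod seqMS_eq_generateFrom.symm hD
    ⟨fun _ => Set.univ, fun _ => ⟨0, Fin.elim0, by ext x; simp [cyl]⟩, Set.iUnion_const _⟩
    ⟨fun _ => Set.univ, fun _ => trivial, Set.iUnion_const _⟩).symm

lemma isPiSystem_rectSets (d : ℕ) : IsPiSystem (RectSets I d) := by
  rintro R ⟨S, hS, T, -, rfl⟩ R' ⟨S', hS', T', -, rfl⟩ hne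
  rw [Set.prod_inter_prod]
  have hSne : (S ∩ S').Nonempty := by
    obtain ⟨⟨x, y⟩, hx⟩ := hne
    exact ⟨x, hx.1.1, hx.2.1⟩
  exact ⟨S ∩ S', isPiSystem_cylSets S hS S' hS' hSne, T ∩ T', trivial, rfl⟩

/-- finite measures on the product space agreeing on rectangles agree -/
lemma measure_ext_rect {d : ℕ} {m₁ m₂ : Measure ((ℕ → I) × Fin d)} [IsFiniteMeasure m₁]
    (h : ∀ (n : ℕ) (g : Fin n → I) (T : Set (Fin d)), m₁ (cyl g ×ˢ T) = m₂ (cyl g ×ˢ T)) :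
    m₁ = m₂ := by
  refine ext_of_generate_finite (RectSets I d) (prodMS_eq_generateFrom d) (isPiSystem_rectSets d)
    (by rintro R ⟨S, ⟨n, g, rfl⟩, T, -, rfl⟩; exact h n g T) ?_
  have hu : (Set.univ : Set ((ℕ → I) × Fin d)) =
      cyl (Fin.elim0 : Fin 0 → I) ×ˢ (Set.univ : Set (Fin d)) := by
    ext x; simp [cyl]
  rw [hu]; exact h 0 _ _

section
variable {ρ : I → ℝ≥0∞} {μ : Measure (ℕ → I)} {d : ℕ} {a : I → Equiv.Perm (Fin d)}

lemma measurable_bernSkew (a : I → Equiv.Perm (Fin d)) :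
    Measurable (bernSkew a : (ℕ → I) × Fin d → (ℕ → I) × Fin d) := by
  letI : MeasurableSpace I := ⊤
  haveI : MeasurableSingletonClass I := instMSC_top
  apply Measurable.prod
  · exact measurable_shift.comp measurable_fst
  · have h1 : Measurable fun q : (ℕ → I) × Fin d => (q.1 0, q.2) :=
      ((measurable_pi_apply 0).comp measurable_fst).prodMk measurable_snd
    exact (measurable_of_countable (fun p : I × Fin d => (a p.1)⁻¹ p.2)).comp h1

/-- the union decomposition of the skew preimage of a rectangle -/
lemma bernSkew_preimage_rect {n : ℕ} (v : Fin n → I) (T : Set (Fin d)) :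
    bernSkew a ⁻¹' (cyl v ×ˢ T) =
      ⋃ i : I, ({x : ℕ → I | x 0 = i} ∩ shift ⁻¹' (cyl v)) ×ˢ (⇑(a i)⁻¹ ⁻¹' T) := by
  ext ⟨x, y⟩
  simp only [Set.mem_preimage, bernSkew, Set.mem_prod, Set.mem_iUnion, Set.mem_inter_iff,
    Set.mem_setOf_eq]
  constructor
  · rintro ⟨h1, h2⟩
    exact ⟨x 0, ⟨rfl, h1⟩, h2⟩
  · rintro ⟨i, ⟨hi, h1⟩, h2⟩
    subst hi
    exact ⟨h1, h2⟩

lemma bernSkew_measurePreserving (hρ : IsProbVector ρ) (hμ : IsProductMeasure ρ μ)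
    (hd : d ≠ 0) (a : I → Equiv.Perm (Fin d)) :
    MeasurePreserving (bernSkew a) (μ.prod (unif d)) (μ.prod (unif d)) := by
  haveI := hμ.1
  haveI := unif_isProb hd
  refine ⟨measurable_bernSkew a, ?_⟩
  apply measure_ext_rect
  intro n v T
  rw [Measure.map_apply (measurable_bernSkew a) ((measurableSet_cyl v).prod trivial)]
  rw [bernSkew_preimage_rect]
  rw [measure_iUnion]
  · have heval : ∀ i : I, (μ.prod (unif d))
        ((({x : ℕ → I | x 0 = i} ∩ shift ⁻¹' (cyl v)) ×ˢ (⇑(a i)⁻¹ ⁻¹' T))) =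
        ρ i * (μ (cyl v) * unif d T) := by
      intro i
      rw [Measure.prod_prod]
      have h1 : μ ({x : ℕ → I | x 0 = i} ∩ shift ⁻¹' (cyl v)) = ρ i * μ (cyl v) := by
        have := measure_cyl_inter_shift hμ (fun _ : Fin 1 => i) (measurableSet_cyl v)
        rw [Function.iterate_one, cyl_one_eq, measure_cyl_one hμ] at this
        rw [this]
      rw [h1, unif_preimage_perm]
      ring
    simp_rw [heval]
    rw [ENNReal.tsum_mul_right, hρ.2, one_mul, Measure.prod_prod]
  · intro i j hij
    simp only [Function.onFun]
    apply Set.disjoint_left.2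
    rintro ⟨x, y⟩ ⟨⟨hx1, -⟩, -⟩ ⟨⟨hx2, -⟩, -⟩
    exact hij (hx1.symm.trans hx2)
  · intro i
    exact (((measurableSet_zero i).inter (measurable_shift (measurableSet_cyl v))).prod trivial)

/-! ### the inverse branches -/

/-- prepend a letter -/
def ins (i : I) (x : ℕ → I) : ℕ → I := fun k => Nat.casesOn k i x

@[simp] lemma ins_zero (i : I) (x : ℕ → I) : ins i x 0 = i := rfl
@[simp] lemma ins_succ (i : I) (x : ℕ → I) (k : ℕ) : ins i x (k + 1) = x k := rfl
@[simp] lemma shift_ins (i : I) (x : ℕ → I) : shift (ins i x) = x := rfl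

lemma measurable_ins (i : I) : Measurable (ins i : (ℕ → I) → (ℕ → I)) := by
  letI : MeasurableSpace I := ⊤
  apply measurable_pi_lambda
  intro k
  cases k with
  | zero => exact measurable_const
  | succ k => exact measurable_pi_apply k

/-- the branch of `bernSkew a` through letter `i` -/
def iota (a : I → Equiv.Perm (Fin d)) (i : I) : (ℕ → I) × Fin d → (ℕ → I) × Fin d :=
  Prod.map (ins i) (⇑(a i))

lemma measurable_iota (i : I) : Measurable (iota a i) := by
  letI : MeasurableSpace I := ⊤
  haveI : MeasurableSingletonClass I := instMSC_top
  exact (measurable_ins i).prodMap (measurable_of_countable _)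

@[simp] lemma bernSkew_iota (i : I) (p : (ℕ → I) × Fin d) : bernSkew a (iota a i p) = p := by
  cases p with
  | mk x y =>
    simp only [bernSkew, iota, Prod.map, shift_ins, ins_zero]
    exact Prod.ext rfl (Equiv.Perm.inv_apply_self _ _)

@[simp] lemma iota_fst_zero (i : I) (p : (ℕ → I) × Fin d) : (iota a i p).1 0 = i := rfl

lemma ins_mem_cyl {n : ℕ} (i : I) (v : Fin (n + 1) → I) (x : ℕ → I) :
    ins i x ∈ cyl v ↔ v 0 = i ∧ x ∈ cyl (fun k : Fin n => v k.succ) := by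
  constructor
  · intro h
    refine ⟨(h 0).symm, fun k => ?_⟩
    have := h k.succ
    rwa [Fin.val_succ, ins_succ] at this
  · rintro ⟨h0, h⟩ k
    refine Fin.cases ?_ (fun k0 => ?_) k
    · simpa using h0.symm
    · have := h k0
      rwa [Fin.val_succ, ins_succ]

/-- the set of points whose zero coordinate is `i` -/
def B (I : Type) (d : ℕ) (i : I) : Set ((ℕ → I) × Fin d) := {q | q.1 0 = i}

lemma measurableSet_B (i : I) : MeasurableSet (B I d i) := by
  have : B I d i = {x : ℕ → I | x 0 = i} ×ˢ (Set.univ : Set (Fin d)) := by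
    ext ⟨x, y⟩; simp [B]
  rw [this]
  exact (measurableSet_zero i).prod trivial

lemma B_eq_prod (i : I) : B I d i = {x : ℕ → I | x 0 = i} ×ˢ (Set.univ : Set (Fin d)) := by
  ext ⟨x, y⟩; simp [B]

lemma iUnion_B : (⋃ i : I, B I d i) = Set.univ := by
  ext q; simp [B]

lemma disjoint_B {i j : I} (hij : i ≠ j) : Disjoint (B I d i) (B I d j) := by
  apply Set.disjoint_left.2
  rintro q h1 h2
  exact hij ((h1 : q.1 0 = i).symm.trans h2)

/-- (L1): the key identity for the branch maps -/
lemma iota_measure (hρ : IsProbVector ρ) (hμ : IsProductMeasure ρ μ) (hd : d ≠ 0)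
    (a : I → Equiv.Perm (Fin d)) (i : I) {W : Set ((ℕ → I) × Fin d)} (hW : MeasurableSet W) :
    ρ i * (μ.prod (unif d)) (iota a i ⁻¹' W) = (μ.prod (unif d)) (W ∩ B I d i) := by
  haveI := hμ.1
  haveI := unif_isProb hd
  set m := μ.prod (unif d)
  set ν₁ : Measure ((ℕ → I) × Fin d) := ρ i • (m.map (iota a i)) with hν₁
  set ν₂ : Measure ((ℕ → I) × Fin d) := m.restrict (B I d i) with hν₂
  have happ₁ : ∀ {W : Set ((ℕ → I) × Fin d)}, MeasurableSet W →
      ν₁ W = ρ i * m (iota a i ⁻¹' W) := by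
    intro W hW
    rw [hν₁, Measure.smul_apply, Measure.map_apply (measurable_iota i) hW, smul_eq_mul]
  have happ₂ : ∀ {W : Set ((ℕ → I) × Fin d)}, MeasurableSet W →
      ν₂ W = m (W ∩ B I d i) := by
    intro W hW
    rw [hν₂, Measure.restrict_apply hW]
  haveI : IsFiniteMeasure ν₁ := by
    constructor
    rw [happ₁ MeasurableSet.univ]
    have : ρ i ≤ 1 := by
      rw [← hρ.2]
      exact ENNReal.le_tsum i
    calc ρ i * m (iota a i ⁻¹' Set.univ) ≤ 1 * 1 := by
          apply mul_le_mul' this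
          exact le_trans (measure_mono (Set.subset_univ _)) (le_of_eq measure_univ)
      _ < ⊤ := by norm_num
  have key : ν₁ = ν₂ := by
    apply measure_ext_rect
    intro n v T
    rw [happ₁ ((measurableSet_cyl v).prod trivial), happ₂ ((measurableSet_cyl v).prod trivial)]
    have hpre : iota a i ⁻¹' (cyl v ×ˢ T) = (ins i ⁻¹' cyl v) ×ˢ (⇑(a i) ⁻¹' T) := by
      ext ⟨x, y⟩; simp [iota, Set.mem_prod]
    have hint : (cyl v ×ˢ T) ∩ B I d i = (cyl v ∩ {x : ℕ → I | x 0 = i}) ×ˢ T := by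
      rw [B_eq_prod, Set.prod_inter_prod, Set.inter_univ]
    rw [hpre, hint, Measure.prod_prod, Measure.prod_prod]
    have hperm : unif d (⇑(a i) ⁻¹' T) = unif d T := unif_preimage_perm (a i) T
    cases n with
    | zero =>
      have h1 : ins i ⁻¹' cyl v = Set.univ := by
        rw [cyl_zero_eq]; simp
      have h2 : cyl v ∩ {x : ℕ → I | x 0 = i} = {x : ℕ → I | x 0 = i} := by
        rw [cyl_zero_eq]; simp
      rw [h1, h2, hperm, measure_univ, measure_cyl_one hμ]
      ring
    | succ n =>
      by_cases h0 : v 0 = i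
      · have h1 : ins i ⁻¹' cyl v = cyl (fun k : Fin n => v k.succ) := by
          ext x
          rw [Set.mem_preimage, ins_mem_cyl]
          simp [h0]
        have h2 : cyl v ∩ {x : ℕ → I | x 0 = i} = cyl v := by
          apply Set.inter_eq_self_of_subset_left
          intro x hx
          have := hx 0
          simp only [Fin.val_zero] at this
          rw [Set.mem_setOf_eq, this, h0]
        rw [h1, h2, hperm, hμ.2, hμ.2]
        rw [Fin.prod_univ_succ, h0]
        ring
      · have h1 : ins i ⁻¹' cyl v = ∅ := by
          ext x
          rw [Set.mem_preimage, ins_mem_cyl]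
          simp [h0]
        have h2 : cyl v ∩ {x : ℕ → I | x 0 = i} = ∅ := by
          ext x
          simp only [Set.mem_inter_iff, Set.mem_setOf_eq, Set.mem_empty_iff_false, iff_false,
            not_and]
          intro hx hx0
          apply h0
          have := hx 0
          simp only [Fin.val_zero] at this
          rw [← this, hx0]
        rw [h1, h2]
        simp
  calc ρ i * m (iota a i ⁻¹' W) = ν₁ W := (happ₁ hW).symm
    _ = ν₂ W := by rw [key]
    _ = m (W ∩ B I d i) := happ₂ hW

/-- `bernSkew` is injective on each `B i` -/
lemma bernSkew_inj_on_B {a : I → Equiv.Perm (Fin d)} {q q' : (ℕ → I) × Fin d}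
    (h0 : q.1 0 = q'.1 0) (h : bernSkew a q = bernSkew a q') : q = q' := by
  have h1 : shift q.1 = shift q'.1 := congrArg Prod.fst h
  have hx : q.1 = q'.1 := by
    funext k
    cases k with
    | zero => exact h0
    | succ k => exact congrFun h1 k
  have h2 : (a (q.1 0))⁻¹ q.2 = (a (q'.1 0))⁻¹ q'.2 := congrArg Prod.snd h
  rw [h0] at h2
  have : q.2 = q'.2 := (a (q'.1 0))⁻¹.injective h2
  exact Prod.ext hx this

def wordPerm {d : ℕ} (a : I → Equiv.Perm (Fin d)) (n : ℕ) (x : ℕ → I) : Equiv.Perm (Fin d) :=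
  (List.ofFn fun j : Fin n => a (x (j : ℕ))).prod

@[simp] lemma wordPerm_zero (a : I → Equiv.Perm (Fin d)) (x : ℕ → I) :
    wordPerm a 0 x = 1 := by simp [wordPerm]

lemma wordPerm_succ (a : I → Equiv.Perm (Fin d)) (n : ℕ) (x : ℕ → I) :
    wordPerm a (n + 1) x = a (x 0) * wordPerm a n (shift x) := by
  rw [wordPerm, List.ofFn_succ, List.prod_cons]
  congr 1

def wordPermW {d : ℕ} (a : I → Equiv.Perm (Fin d)) {n : ℕ} (w : Fin n → I) :
    Equiv.Perm (Fin d) :=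
  (List.ofFn fun j : Fin n => a (w j)).prod

lemma wordPerm_eq_of_mem_cyl {a : I → Equiv.Perm (Fin d)} {n : ℕ} {w : Fin n → I} {x : ℕ → I}
    (hx : x ∈ cyl w) : wordPerm a n x = wordPermW a w := by
  unfold wordPerm wordPermW
  exact congrArg List.prod (congrArg List.ofFn (funext fun j => by rw [hx j]))

section Core
variable {b : I → Equiv.Perm (Fin d)} {Φ Ψ : (ℕ → I) × Fin d → (ℕ → I) × Fin d}
local notation "m" => μ.prod (unif d)

lemma iota_preimage_null (hρ : IsProbVector ρ) (hμ : IsProductMeasure ρ μ) (hd : d ≠ 0)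
    {i : I} (hi : ρ i ≠ 0) {N : Set ((ℕ → I) × Fin d)} (hNm : MeasurableSet N)
    (hN : m N = 0) {a : I → Equiv.Perm (Fin d)} : m (iota a i ⁻¹' N) = 0 := by
  have h := iota_measure hρ hμ hd a i hNm
  have h2 : m (N ∩ B I d i) = 0 :=
    le_antisymm (le_trans (measure_mono Set.inter_subset_left) hN.le) zero_le
  rw [h2] at h
  exact (mul_eq_zero.mp h).resolve_left hi

/-- decomposition of a measure over the sets `B i` -/
lemma measure_eq_tsum_B {W : Set ((ℕ → I) × Fin d)} (hW : MeasurableSet W) :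
    m W = ∑' i : I, m (W ∩ B I d i) := by
  have : W = ⋃ i : I, W ∩ B I d i := by
    rw [← Set.inter_iUnion, iUnion_B, Set.inter_univ]
  conv_lhs => rw [this]
  rw [measure_iUnion]
  · intro i j hij
    exact (disjoint_B hij).mono Set.inter_subset_right Set.inter_subset_right
  · exact fun i => hW.inter (measurableSet_B i)

/-- Claim A : the isomorphism preserves the weight of the zero coordinate. -/
lemma claimA (hρ : IsProbVector ρ) (hμ : IsProductMeasure ρ μ) (hd : d ≠ 0)
    (hΦ : MeasurePreserving Φ m m) (hΨ : MeasurePreserving Ψ m m)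
    (hint : ∀ᵐ q ∂m, Φ (bernSkew a q) = bernSkew b (Φ q))
    (hΨΦ : ∀ᵐ q ∂m, Ψ (Φ q) = q) :
    ∀ᵐ q ∂m, ρ ((Φ q).1 0) = ρ (q.1 0) := by
  haveI := hμ.1
  haveI := unif_isProb hd
  have hTa := bernSkew_measurePreserving hρ hμ hd a
  have hTb := bernSkew_measurePreserving hρ hμ hd b
  -- the reverse intertwining relation
  have hint' : ∀ᵐ q ∂m, Ψ (bernSkew b (Φ q)) = bernSkew a q := by
    filter_upwards [hint, ae_comp hTa hΨΦ] with q h1 h2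
    rw [← h1]; exact h2
  -- measurable conull sets
  obtain ⟨E, hEm, hE0, hE⟩ := exists_conull (hint.and hΨΦ)
  obtain ⟨E', hE'm, hE'0, hE'⟩ := exists_conull hint'
  set Good : Set ((ℕ → I) × Fin d) := ⋂ i : I, iota a i ⁻¹' E with hGood
  have hGoodm : MeasurableSet Good := MeasurableSet.iInter fun i => measurable_iota i hEm
  have hGood0 : m Goodᶜ = 0 := by
    rw [hGood, Set.compl_iInter]
    refine measure_iUnion_null fun i => ?_
    rw [← Set.preimage_compl]
    exact iota_preimage_null hρ hμ hd (hρ.1 i).ne' hEm.compl hE0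
  set A : I → I → Set ((ℕ → I) × Fin d) := fun i j => iota a i ⁻¹' (Φ ⁻¹' B I d j) with hA
  have hAm : ∀ i j, MeasurableSet (A i j) := fun i j =>
    measurable_iota i (hΦ.measurable (measurableSet_B j))
  -- at good points the branch label is determined by the target label
  have hinj : ∀ p ∈ Good, ∀ i i' j, p ∈ A i j → p ∈ A i' j → i = i' := by
    intro p hp i i' j hpij hpi'j
    have hq : iota a i p ∈ E := Set.mem_iInter.mp hp i
    have hq' : iota a i' p ∈ E := Set.mem_iInter.mp hp i'
    obtain ⟨hq1, hq2⟩ := hE _ hq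
    obtain ⟨hq'1, hq'2⟩ := hE _ hq'
    have him : bernSkew b (Φ (iota a i p)) = bernSkew b (Φ (iota a i' p)) := by
      rw [← hq1, ← hq'1, bernSkew_iota, bernSkew_iota]
    have heq : Φ (iota a i p) = Φ (iota a i' p) := by
      apply bernSkew_inj_on_B _ him
      exact (hpij : (Φ (iota a i p)).1 0 = j).trans (hpi'j : (Φ (iota a i' p)).1 0 = j).symm
    have : iota a i p = iota a i' p := by
      rw [← hq2, ← hq'2, heq]
    calc i = (iota a i p).1 0 := (iota_fst_zero i p).symm
      _ = (iota a i' p).1 0 := by rw [this]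
      _ = i' := iota_fst_zero i' p
  -- the measure identity
  have hiden : ∀ (j : I) (S : Set ((ℕ → I) × Fin d)), MeasurableSet S →
      (∑' i : I, ρ i * m (S ∩ A i j)) = ρ j * m S := by
    intro j S hS
    have hWm : MeasurableSet (bernSkew a ⁻¹' S ∩ Φ ⁻¹' B I d j) :=
      (hTa.measurable hS).inter (hΦ.measurable (measurableSet_B j))
    have step1 : (∑' i : I, ρ i * m (S ∩ A i j)) = m (bernSkew a ⁻¹' S ∩ Φ ⁻¹' B I d j) := by
      rw [measure_eq_tsum_B hWm]
      congr 1
      funext i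
      have h := iota_measure hρ hμ hd a i hWm
      have hpre : iota a i ⁻¹' (bernSkew a ⁻¹' S ∩ Φ ⁻¹' B I d j) = S ∩ A i j := by
        rw [Set.preimage_inter]
        congr 1
        ext p
        simp only [Set.mem_preimage, bernSkew_iota]
      rw [← h, hpre]
    have step2 : m (bernSkew a ⁻¹' S ∩ Φ ⁻¹' B I d j) =
        m (Φ ⁻¹' (bernSkew b ⁻¹' (Ψ ⁻¹' S) ∩ B I d j)) := by
      rw [Set.preimage_inter]
      apply measure_congr
      apply Filter.EventuallyEq.inter _ (Filter.EventuallyEq.refl _ _)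
      have : ∀ᵐ q ∂m, (q ∈ bernSkew a ⁻¹' S) = (q ∈ Φ ⁻¹' (bernSkew b ⁻¹' (Ψ ⁻¹' S)))  := by
        filter_upwards [hint'] with q h1
        simp only [Set.mem_preimage, ← h1, eq_iff_iff]
      exact this
    have step3 : m (Φ ⁻¹' (bernSkew b ⁻¹' (Ψ ⁻¹' S) ∩ B I d j)) = ρ j * m S := by
      rw [hΦ.measure_preimage (((hTb.measurable (hΨ.measurable hS)).inter
        (measurableSet_B j)).nullMeasurableSet)]
      have h := iota_measure hρ hμ hd b j (hTb.measurable (hΨ.measurable hS))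
      have hpre : iota b j ⁻¹' (bernSkew b ⁻¹' (Ψ ⁻¹' S)) = Ψ ⁻¹' S := by
        ext p
        simp only [Set.mem_preimage, bernSkew_iota]
      rw [hpre] at h
      rw [← h, hΨ.measure_preimage hS.nullMeasurableSet]
    rw [step1, step2, step3]
  -- the bad sets are null
  have hbad : ∀ i j : I, ρ i ≠ ρ j → m (A i j ∩ Good) = 0 := by
    intro i j hij
    have hSm : MeasurableSet (A i j ∩ Good) := (hAm i j).inter hGoodm
    have h := hiden j (A i j ∩ Good) hSm
    have hcollapse : (∑' i' : I, ρ i' * m ((A i j ∩ Good) ∩ A i' j)) =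
        ρ i * m ((A i j ∩ Good) ∩ A i j) := by
      apply tsum_eq_single
      intro i' hi'
      have : (A i j ∩ Good) ∩ A i' j = ∅ := by
        rw [Set.eq_empty_iff_forall_notMem]
        rintro p ⟨⟨hpA, hpG⟩, hpA'⟩
        exact hi' (hinj p hpG i' i j hpA' hpA)
      rw [this]
      simp
    rw [hcollapse] at h
    have hsimp : (A i j ∩ Good) ∩ A i j = A i j ∩ Good := by
      rw [Set.inter_eq_self_of_subset_left Set.inter_subset_left]
    rw [hsimp] at h
    by_contra hc
    exact hij ((ENNReal.mul_left_strictMono hc (measure_ne_top _ _)).injective h)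
  set Bad : Set ((ℕ → I) × Fin d) :=
    ⋃ (i : I) (j : I) (_ : ρ i ≠ ρ j), A i j ∩ Good with hBad
  have hBad0 : m Bad = 0 :=
    measure_iUnion_null fun i => measure_iUnion_null fun j =>
      measure_iUnion_null fun hij => hbad i j hij
  -- conclusion
  have hkey : ∀ p ∈ Good \ Bad, ∀ i : I, ρ ((Φ (iota a i p)).1 0) = ρ i := by
    intro p hp i
    set j := (Φ (iota a i p)).1 0 with hj
    have hpA : p ∈ A i j := by
      show (Φ (iota a i p)).1 0 = j
      rfl
    by_contra hc
    have hne : ρ i ≠ ρ j := fun h => hc h.symm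
    exact hp.2 (Set.mem_iUnion.2 ⟨i, Set.mem_iUnion.2 ⟨j, Set.mem_iUnion.2
      ⟨hne, ⟨hpA, hp.1⟩⟩⟩⟩)
  set V : Set ((ℕ → I) × Fin d) := {q | ρ ((Φ q).1 0) = ρ (q.1 0)} with hV
  have hVm : MeasurableSet V := by
    letI : MeasurableSpace I := ⊤
    haveI : MeasurableSingletonClass I := instMSC_top
    have hmap : Measurable fun q : (ℕ → I) × Fin d => ((Φ q).1 0, q.1 0) :=
      ((measurable_pi_apply 0).comp (measurable_fst.comp hΦ.measurable)).prodMk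
        ((measurable_pi_apply 0).comp measurable_fst)
    have : V = (fun q : (ℕ → I) × Fin d => ((Φ q).1 0, q.1 0)) ⁻¹'
        {p : I × I | ρ p.1 = ρ p.2} := rfl
    rw [this]
    exact hmap ((Set.to_countable _).measurableSet)
  rw [MeasureTheory.ae_iff]
  have hsub : {q | ¬ ρ ((Φ q).1 0) = ρ (q.1 0)} = Vᶜ := rfl
  rw [hsub]
  rw [measure_eq_tsum_B hVm.compl]
  have : ∀ i : I, m (Vᶜ ∩ B I d i) = 0 := by
    intro i
    rw [← iota_measure hρ hμ hd a i hVm.compl]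
    have hsub2 : iota a i ⁻¹' Vᶜ ⊆ (Good \ Bad)ᶜ := by
      intro p hp
      by_contra hc
      rw [Set.notMem_compl_iff] at hc
      apply hp
      show iota a i p ∈ V
      show ρ ((Φ (iota a i p)).1 0) = ρ ((iota a i p).1 0)
      rw [iota_fst_zero]
      exact hkey p hc i
    have h0 : m ((Good \ Bad)ᶜ) = 0 := by
      have : (Good \ Bad)ᶜ = Goodᶜ ∪ Bad := by
        rw [Set.diff_eq, Set.compl_inter, compl_compl]
      rw [this]
      exact measure_union_null hGood0 hBad0
    have : m (iota a i ⁻¹' Vᶜ) = 0 :=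
      le_antisymm (le_trans (measure_mono hsub2) h0.le) zero_le
    rw [this, mul_zero]
  simp_rw [this]
  exact tsum_zero

/-- the slice functions are measurable -/
lemma measurable_slice (hΦ : Measurable Φ) (y : Fin d) :
    Measurable fun x : ℕ → I => (Φ (x, y)).2 :=
  measurable_snd.comp (hΦ.comp measurable_prodMk_right)

lemma measurableSet_Dset (hΦ : Measurable Φ) (h : Fin d → Fin d) :
    MeasurableSet {x : ℕ → I | (fun y => (Φ (x, y)).2) = h} := by
  have : {x : ℕ → I | (fun y => (Φ (x, y)).2) = h} =
      ⋂ y : Fin d, {x : ℕ → I | (Φ (x, y)).2 = h y} := by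
    ext x
    simp [funext_iff]
  rw [this]
  exact MeasurableSet.iInter fun y => measurable_slice hΦ y (MeasurableSet.singleton (h y))

/-- the fundamental cocycle relation for the slices -/
lemma cocycle_ae (hρ : IsProbVector ρ) (hμ : IsProductMeasure ρ μ) (hd : d ≠ 0)
    (hmodb : ∀ i i', ρ i = ρ i' → b i = b i')
    (hΦ : MeasurePreserving Φ (μ.prod (unif d)) (μ.prod (unif d)))
    (hΨ : MeasurePreserving Ψ (μ.prod (unif d)) (μ.prod (unif d)))
    (hint : ∀ᵐ q ∂(μ.prod (unif d)), Φ (bernSkew a q) = bernSkew b (Φ q))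
    (hΨΦ : ∀ᵐ q ∂(μ.prod (unif d)), Ψ (Φ q) = q) :
    ∀ᵐ x ∂μ, ∀ z : Fin d, (Φ (x, a (x 0) z)).2 = b (x 0) ((Φ (shift x, z)).2) := by
  haveI := hμ.1
  haveI := unif_isProb hd
  have hA := claimA hρ hμ hd hΦ hΨ hint hΨΦ
  have key : ∀ᵐ q ∂(μ.prod (unif d)),
      (Φ (shift q.1, (a (q.1 0))⁻¹ q.2)).2 = (b (q.1 0))⁻¹ ((Φ q).2) := by
    filter_upwards [hint, hA] with q h1 h2
    have := congrArg Prod.snd h1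
    simp only [bernSkew] at this ⊢
    rw [this]
    congr 2
    exact hmodb _ _ h2
  have key2 := Measure.ae_ae_of_ae_prod key
  filter_upwards [key2] with x hx
  have hx' : ∀ y : Fin d, (Φ (shift x, (a (x 0))⁻¹ y)).2 = (b (x 0))⁻¹ ((Φ (x, y)).2) :=
    unif_ae_all hd hx
  intro z
  have := hx' (a (x 0) z)
  rw [Equiv.Perm.inv_apply_self] at this
  rw [this, Equiv.Perm.apply_inv_self]

/-- the iterated cocycle relation -/
lemma cocycle_iter (hρ : IsProbVector ρ) (hμ : IsProductMeasure ρ μ)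
    {G : Set (ℕ → I)}
    (hG : ∀ x ∈ G, ∀ z : Fin d, (Φ (x, a (x 0) z)).2 = b (x 0) ((Φ (shift x, z)).2)) :
    ∀ n : ℕ, ∀ x, (∀ k : ℕ, shift^[k] x ∈ G) → ∀ z : Fin d,
      (Φ (x, wordPerm a n x z)).2 = wordPerm b n x ((Φ (shift^[n] x, z)).2) := by
  intro n
  induction n with
  | zero => intro x hx z; simp
  | succ n ih =>
    intro x hx z
    have hxG : x ∈ G := by simpa using hx 0
    have hshift : ∀ k : ℕ, shift^[k] (shift x) ∈ G := by
      intro k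
      have := hx (k + 1)
      rwa [Function.iterate_succ_apply] at this
    rw [wordPerm_succ, wordPerm_succ]
    rw [Equiv.Perm.mul_apply, Equiv.Perm.mul_apply]
    rw [hG x hxG (wordPerm a n (shift x) z)]
    rw [ih (shift x) hshift z]
    rw [Function.iterate_succ_apply]

lemma cyl_disjoint {n : ℕ} {w w' : Fin n → I} (h : w ≠ w') : Disjoint (cyl w) (cyl w') := by
  rw [cyl_eq_trunc, cyl_eq_trunc]
  exact Disjoint.preimage _ (by simpa using h)

lemma measure_trunc_inter (hD : MeasurableSet D) {n : ℕ} (W : Set (Fin n → I)) :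
    μ (D ∩ trunc n ⁻¹' W) = ∑' w : W, μ (D ∩ cyl (w : Fin n → I)) := by
  rw [trunc_preimage_eq_iUnion, Set.inter_iUnion₂]
  rw [measure_biUnion (Set.to_countable W) ?_ ?_]
  · intro w hw w' hw' hne
    exact (cyl_disjoint hne).mono Set.inter_subset_right Set.inter_subset_right
  · exact fun w _ => hD.inter (measurableSet_cyl w)

/-- the main rigidity lemma : the second component of Φ is a.e. given by a fixed
self-map of the fiber intertwining the cocycles. -/
lemma core_const (hρ : IsProbVector ρ) (hμ : IsProductMeasure ρ μ) (hd : d ≠ 0)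
    (hmodb : ∀ i i', ρ i = ρ i' → b i = b i')
    (hΦ : MeasurePreserving Φ (μ.prod (unif d)) (μ.prod (unif d)))
    (hΨ : MeasurePreserving Ψ (μ.prod (unif d)) (μ.prod (unif d)))
    (hint : ∀ᵐ q ∂(μ.prod (unif d)), Φ (bernSkew a q) = bernSkew b (Φ q))
    (hΨΦ : ∀ᵐ q ∂(μ.prod (unif d)), Ψ (Φ q) = q) :
    ∃ h : Fin d → Fin d, (∀ i y, b i (h y) = h (a i y)) ∧
      (∀ᵐ q ∂(μ.prod (unif d)), (Φ q).2 = h q.2) := by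
  haveI := hμ.1
  haveI := unif_isProb hd
  obtain ⟨G, hGm, hG0, hG⟩ := exists_conull (cocycle_ae hρ hμ hd hmodb hΦ hΨ hint hΨΦ)
  have hshiftmp := shift_measurePreserving hρ hμ
  set G' : Set (ℕ → I) := ⋂ k : ℕ, shift^[k] ⁻¹' G with hG'def
  have hG'm : MeasurableSet G' :=
    MeasurableSet.iInter fun k => (measurable_shift.iterate k) hGm
  have hG'0 : μ G'ᶜ = 0 := by
    rw [hG'def, Set.compl_iInter]
    refine measure_iUnion_null fun k => ?_
    rw [← Set.preimage_compl]
    have := (hshiftmp.iterate k).measure_preimage hGm.compl.nullMeasurableSet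
    rw [this]
    exact hG0
  have hiter := cocycle_iter (Φ := Φ) (a := a) (b := b) hρ hμ (G := G) hG
  -- the maximal atom
  set Dset : (Fin d → Fin d) → Set (ℕ → I) :=
    fun h => {x : ℕ → I | (fun y => (Φ (x, y)).2) = h} with hDdef
  have hDm : ∀ h, MeasurableSet (Dset h) := fun h => measurableSet_Dset hΦ.measurable h
  haveI : Nonempty (Fin d → Fin d) := ⟨fun y => y⟩
  obtain ⟨h₀, hmax⟩ := Finite.exists_max (fun h : Fin d → Fin d => μ (Dset h))
  set t := μ (Dset h₀) with ht
  have ht1 : t ≤ 1 := le_trans (measure_mono (Set.subset_univ _)) measure_univ.le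
  have htpos : t ≠ 0 := by
    intro h0
    have hcover : (Set.univ : Set (ℕ → I)) ⊆ ⋃ h ∈ (Finset.univ : Finset (Fin d → Fin d)), Dset h := by
      intro x _
      exact Set.mem_biUnion (Finset.mem_univ _) rfl
    have h1 : (1 : ℝ≥0∞) ≤ ∑ h ∈ (Finset.univ : Finset (Fin d → Fin d)), μ (Dset h) := by
      calc (1 : ℝ≥0∞) = μ Set.univ := measure_univ.symm
        _ ≤ μ (⋃ h ∈ (Finset.univ : Finset (Fin d → Fin d)), Dset h) := measure_mono hcover
        _ ≤ ∑ h ∈ (Finset.univ : Finset (Fin d → Fin d)), μ (Dset h) :=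
            measure_biUnion_finset_le _ _
    have h2 : ∑ h ∈ (Finset.univ : Finset (Fin d → Fin d)), μ (Dset h) = 0 := by
      apply Finset.sum_eq_zero
      intro h _
      exact le_antisymm (le_trans (hmax h) h0.le) zero_le
    rw [h2] at h1
    norm_num at h1
  -- the cylinder bound
  have hcylbound : ∀ (n : ℕ) (w : Fin n → I), μ (Dset h₀ ∩ cyl w) ≤ μ (cyl w) * t := by
    intro n w
    set hw : Fin d → Fin d := fun z => (wordPermW b w)⁻¹ (h₀ (wordPermW a w z)) with hhw
    have hseteq : Dset h₀ ∩ cyl w ∩ G' = cyl w ∩ shift^[n] ⁻¹' (Dset hw) ∩ G' := by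
      ext x
      simp only [Set.mem_inter_iff, Set.mem_preimage]
      constructor
      · rintro ⟨⟨hD, hcylw⟩, hG'x⟩
        refine ⟨⟨hcylw, ?_⟩, hG'x⟩
        funext z
        have hit := hiter n x (fun k => Set.mem_iInter.mp hG'x k) z
        rw [wordPerm_eq_of_mem_cyl hcylw, wordPerm_eq_of_mem_cyl hcylw] at hit
        have hD' : (Φ (x, wordPermW a w z)).2 = h₀ (wordPermW a w z) := congrFun hD _
        rw [hD'] at hit
        show (Φ (shift^[n] x, z)).2 = (wordPermW b w)⁻¹ (h₀ ((wordPermW a w) z))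
        rw [hit, Equiv.Perm.inv_apply_self]
      · rintro ⟨⟨hcylw, hDw⟩, hG'x⟩
        refine ⟨⟨?_, hcylw⟩, hG'x⟩
        funext y
        have hit := hiter n x (fun k => Set.mem_iInter.mp hG'x k) ((wordPermW a w)⁻¹ y)
        rw [wordPerm_eq_of_mem_cyl hcylw, wordPerm_eq_of_mem_cyl hcylw] at hit
        rw [Equiv.Perm.apply_inv_self] at hit
        have hDw' : (Φ (shift^[n] x, (wordPermW a w)⁻¹ y)).2 = hw ((wordPermW a w)⁻¹ y) :=
          congrFun hDw _
        rw [hDw'] at hit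
        rw [hit, hhw]
        simp only [Equiv.Perm.apply_inv_self]
    calc μ (Dset h₀ ∩ cyl w) = μ (Dset h₀ ∩ cyl w ∩ G') :=
          (measure_inter_conull' hG'0).symm
      _ = μ (cyl w ∩ shift^[n] ⁻¹' (Dset hw) ∩ G') := by rw [hseteq]
      _ = μ (cyl w ∩ shift^[n] ⁻¹' (Dset hw)) := measure_inter_conull' hG'0
      _ = μ (cyl w) * μ (Dset hw) := measure_cyl_inter_shift hμ w (hDm hw)
      _ ≤ μ (cyl w) * t := by gcongr; exact hmax hw
  -- the approximation bound
  have htineq : t ≤ t * t := by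
    apply ENNReal.le_of_forall_pos_le_add
    intro ε hε _
    have hε0 : ((ε : ℝ≥0∞) / 2) ≠ 0 := by
      simp only [ne_eq, ENNReal.div_eq_zero_iff, not_or]
      exact ⟨by exact_mod_cast hε.ne', by norm_num⟩
    obtain ⟨n, W, hW⟩ := (approx_of_measurable (μ := μ) (hDm h₀)).2 _ hε0
    set A := trunc n ⁻¹' W with hAdef
    have hDA : μ (Dset h₀ ∩ A) ≤ μ A * t := by
      rw [measure_trunc_inter (hDm h₀) W]
      have hA : μ A = ∑' w : W, μ (cyl (w : Fin n → I)) := by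
        have := measure_trunc_inter MeasurableSet.univ W (μ := μ)
        simpa using this
      rw [hA, ENNReal.tsum_mul_right.symm]
      exact ENNReal.tsum_le_tsum fun w => hcylbound n w
    have hdiff1 : μ (Dset h₀ \ A) ≤ (ε : ℝ≥0∞) / 2 :=
      le_trans (measure_mono fun x hx => Or.inl hx) hW
    have hdiff2 : μ (A \ Dset h₀) ≤ (ε : ℝ≥0∞) / 2 :=
      le_trans (measure_mono fun x hx => Or.inr hx) hW
    have hAle : μ A ≤ t + (ε : ℝ≥0∞) / 2 := by
      calc μ A ≤ μ (A ∩ Dset h₀) + μ (A \ Dset h₀) := by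
            refine le_trans (measure_mono fun x hx => ?_) (measure_union_le _ _)
            by_cases h : x ∈ Dset h₀
            · exact Or.inl ⟨hx, h⟩
            · exact Or.inr ⟨hx, h⟩
        _ ≤ t + (ε : ℝ≥0∞) / 2 := by
            gcongr
            exact measure_mono Set.inter_subset_right
    calc t = μ (Dset h₀) := ht
      _ ≤ μ (Dset h₀ ∩ A) + μ (Dset h₀ \ A) := by
          refine le_trans (measure_mono fun x hx => ?_) (measure_union_le _ _)
          by_cases h : x ∈ A
          · exact Or.inl ⟨hx, h⟩
          · exact Or.inr ⟨hx, h⟩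
      _ ≤ μ A * t + (ε : ℝ≥0∞) / 2 := by gcongr
      _ ≤ (t + (ε : ℝ≥0∞) / 2) * t + (ε : ℝ≥0∞) / 2 := by gcongr
      _ = t * t + ((ε : ℝ≥0∞) / 2 * t + (ε : ℝ≥0∞) / 2) := by ring
      _ ≤ t * t + ((ε : ℝ≥0∞) / 2 * 1 + (ε : ℝ≥0∞) / 2) := by gcongr
      _ = t * t + ε := by rw [mul_one, ENNReal.add_halves]
  have hteq : t = 1 := by
    by_contra hne
    have htlt : t < 1 := lt_of_le_of_ne ht1 hne
    have : t * t < t * 1 := by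
      have h := (ENNReal.mul_left_strictMono htpos (ne_top_of_le_ne_top ENNReal.one_ne_top ht1)) htlt
      simpa only [one_mul, mul_one] using h
    rw [mul_one] at this
    exact absurd (lt_of_le_of_lt htineq this) (lt_irrefl t)
  have hDc0 : μ (Dset h₀)ᶜ = 0 := by
    rw [measure_compl (hDm h₀) (measure_ne_top μ _), measure_univ, ← ht, hteq, tsub_self]
  -- the intertwining property
  have hintw : ∀ (i : I) (y : Fin d), b i (h₀ y) = h₀ (a i y) := by
    intro i y
    set C : Set (ℕ → I) := G ∩ (Dset h₀ ∩ shift ⁻¹' (Dset h₀)) with hC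
    have hC0 : μ Cᶜ = 0 := by
      rw [hC, Set.compl_inter, Set.compl_inter]
      refine measure_union_null hG0 (measure_union_null hDc0 ?_)
      rw [← Set.preimage_compl, hshiftmp.measure_preimage (hDm h₀).compl.nullMeasurableSet]
      exact hDc0
    have hpos : μ ({x : ℕ → I | x 0 = i} ∩ C) ≠ 0 := by
      rw [measure_inter_conull' hC0, measure_cyl_one hμ]
      exact (hρ.1 i).ne'
    obtain ⟨x, hx0, hxG, hxD, hxsD⟩ :
        ∃ x : ℕ → I, x 0 = i ∧ x ∈ G ∧ x ∈ Dset h₀ ∧ shift x ∈ Dset h₀ := by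
      obtain ⟨x, hx⟩ := nonempty_of_measure_ne_zero hpos
      exact ⟨x, hx.1, hx.2.1, hx.2.2.1, hx.2.2.2⟩
    have h1 := hG x hxG y
    rw [hx0] at h1
    have h2 : (Φ (x, a i y)).2 = h₀ (a i y) := congrFun hxD _
    have h3 : (Φ (shift x, y)).2 = h₀ y := congrFun hxsD _
    rw [h2, h3] at h1
    exact h1.symm
  refine ⟨h₀, hintw, ?_⟩
  -- the a.e. statement over the product measure
  rw [MeasureTheory.ae_iff]
  have hsub : {q : (ℕ → I) × Fin d | ¬ (Φ q).2 = h₀ q.2} ⊆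
      (Dset h₀)ᶜ ×ˢ (Set.univ : Set (Fin d)) := by
    rintro ⟨x, y⟩ hq
    constructor
    · intro hD
      exact hq (congrFun hD y)
    · trivial
  refine le_antisymm (le_trans (measure_mono hsub) ?_) zero_le
  rw [Measure.prod_prod, hDc0, zero_mul]

end Core
end
end Aux


/-- Let `a₁ a₂ : I → 𝒜_d` be constant on the level sets of `ρ` and
generate transitive subgroups of `𝒜_d`. The skew products `T̄₁` and `T̄₂` on
`X_ρ × Y_d` (the Markov shifts of the `d`-extensions `Ī_{a₁}, Ī_{a₂}`) are
isomorphic mod 0 iff `a₁` and `a₂` are conjugate in `𝒜_d`. -/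
theorem stmt19 {I : Type} [Countable I] [Nontrivial I]
    (ρ : I → ℝ≥0∞) (hρ : IsProbVector ρ)
    (μ : Measure (ℕ → I)) (hμ : IsProductMeasure ρ μ)
    (d : ℕ) (a₁ a₂ : I → Equiv.Perm (Fin d))
    (hmod₁ : ∀ i i', ρ i = ρ i' → a₁ i = a₁ i')
    (hmod₂ : ∀ i i', ρ i = ρ i' → a₂ i = a₂ i')
    (htr₁ : ∀ y y' : Fin d, ∃ g ∈ Subgroup.closure (Set.range a₁), g y = y')
    (htr₂ : ∀ y y' : Fin d, ∃ g ∈ Subgroup.closure (Set.range a₂), g y = y') :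
    IsomorphicMod0 (μ.prod (unif d)) (bernSkew a₁)
        (μ.prod (unif d)) (bernSkew a₂) ↔
      ∃ w₀ : Equiv.Perm (Fin d), ∀ i, a₂ i * w₀ = w₀ * a₁ i := by
  haveI := hμ.1
  rcases Nat.eq_zero_or_pos d with rfl | hdpos
  · -- degenerate case : empty fiber
    haveI : Subsingleton (Equiv.Perm (Fin 0)) := ⟨fun f g => Equiv.ext fun x => x.elim0⟩
    haveI : IsEmpty ((ℕ → I) × Fin 0) := ⟨fun q => q.2.elim0⟩
    constructor
    · intro _
      exact ⟨1, fun i => Subsingleton.elim _ _⟩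
    · intro _
      refine ⟨id, ⟨measurable_id, Measure.map_id⟩, ae_of_all _ (fun q => q.2.elim0), id,
        ⟨measurable_id, Measure.map_id⟩, ae_of_all _ (fun q => q.2.elim0),
        ae_of_all _ (fun q => q.2.elim0)⟩
  have hd : d ≠ 0 := hdpos.ne'
  haveI := unif_isProb hd
  constructor
  · rintro ⟨Φ, hΦ, hint, Ψ, hΨ, hΨΦ, hΦΨ⟩
    set m := μ.prod (unif d) with hm
    have hT₁ := bernSkew_measurePreserving hρ hμ hd a₁
    have hT₂ := bernSkew_measurePreserving hρ hμ hd a₂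
    -- reverse intertwining
    have hintΨ : ∀ᵐ u ∂m, Ψ (bernSkew a₂ u) = bernSkew a₁ (Ψ u) := by
      filter_upwards [hΦΨ, ae_comp hΨ hint, ae_comp (hT₁.comp hΨ) hΨΦ] with u h1 h2 h3
      calc Ψ (bernSkew a₂ u) = Ψ (bernSkew a₂ (Φ (Ψ u))) := by rw [h1]
        _ = Ψ (Φ (bernSkew a₁ (Ψ u))) := by rw [h2]
        _ = bernSkew a₁ (Ψ u) := h3
    obtain ⟨h, hhint, hhae⟩ := core_const hρ hμ hd hmod₂ hΦ hΨ hint hΨΦ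
    obtain ⟨k, hkint, hkae⟩ :=
      core_const (a := a₂) (b := a₁) hρ hμ hd hmod₁ hΨ hΦ hintΨ hΦΨ
    -- k ∘ h = id
    have hcomb : ∀ᵐ q ∂m, q.2 = k (h q.2) := by
      filter_upwards [hΨΦ, hhae, ae_comp hΦ hkae] with q h1 h2 h3
      calc q.2 = (Ψ (Φ q)).2 := by rw [h1]
        _ = k ((Φ q).2) := h3
        _ = k (h q.2) := by rw [h2]
    have hki : ∀ y : Fin d, k (h y) = y := by
      intro y
      obtain ⟨E, hEm, hE0, hE⟩ := exists_conull hcomb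
      have hpos : m ((Set.univ ×ˢ ({y} : Set (Fin d))) ∩ E) ≠ 0 := by
        rw [measure_inter_conull' hE0, Measure.prod_prod, measure_univ, one_mul]
        exact unif_singleton_ne_zero hd y
      obtain ⟨q, hq1, hq2⟩ := nonempty_of_measure_ne_zero hpos
      have hqy : q.2 = y := hq1.2
      have := hE q hq2
      rw [hqy] at this
      exact this.symm
    have hinj : Function.Injective h := Function.LeftInverse.injective hki
    have hbij : Function.Bijective h := Finite.injective_iff_bijective.mp hinj
    refine ⟨Equiv.ofBijective h hbij, fun i => ?_⟩
    apply Equiv.ext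
    intro y
    show a₂ i (h y) = h (a₁ i y)
    exact hhint i y
  · rintro ⟨w₀, hw₀⟩
    have hwmp : MeasurePreserving (⇑w₀) (unif d) (unif d) := by
      refine ⟨measurable_of_finite _, Measure.ext fun s hs => ?_⟩
      rw [Measure.map_apply (measurable_of_finite _) hs]
      exact unif_preimage_perm w₀ s
    have hwmp' : MeasurePreserving (⇑w₀⁻¹) (unif d) (unif d) := by
      refine ⟨measurable_of_finite _, Measure.ext fun s hs => ?_⟩
      rw [Measure.map_apply (measurable_of_finite _) hs]
      exact unif_preimage_perm w₀⁻¹ s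
    have hΦ : MeasurePreserving (Prod.map id ⇑w₀) (μ.prod (unif d)) (μ.prod (unif d)) :=
      (MeasurePreserving.id μ).prod hwmp
    have hΨ : MeasurePreserving (Prod.map id ⇑w₀⁻¹) (μ.prod (unif d)) (μ.prod (unif d)) :=
      (MeasurePreserving.id μ).prod hwmp'
    have hcomm : ∀ i : I, ∀ y : Fin d, w₀ ((a₁ i)⁻¹ y) = (a₂ i)⁻¹ (w₀ y) := by
      intro i y
      have := hw₀ i
      have h1 : a₂ i (w₀ ((a₁ i)⁻¹ y)) = w₀ (a₁ i ((a₁ i)⁻¹ y)) := by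
        have := congrArg (fun e => e ((a₁ i)⁻¹ y)) (hw₀ i)
        simpa [Equiv.Perm.mul_apply] using this
      rw [Equiv.Perm.apply_inv_self] at h1
      calc w₀ ((a₁ i)⁻¹ y) = (a₂ i)⁻¹ (a₂ i (w₀ ((a₁ i)⁻¹ y))) := by
            rw [Equiv.Perm.inv_apply_self]
        _ = (a₂ i)⁻¹ (w₀ y) := by rw [h1]
    refine ⟨Prod.map id ⇑w₀, hΦ, ae_of_all _ (fun q => ?_), Prod.map id ⇑w₀⁻¹, hΨ,
      ae_of_all _ (fun q => ?_), ae_of_all _ (fun q => ?_)⟩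
    · show (shift q.1, w₀ ((a₁ (q.1 0))⁻¹ q.2)) = (shift q.1, (a₂ (q.1 0))⁻¹ (w₀ q.2))
      rw [hcomm]
    · show ((q.1 : ℕ → I), w₀⁻¹ (w₀ q.2)) = q
      rw [Equiv.Perm.inv_apply_self]
    · show ((q.1 : ℕ → I), w₀ (w₀⁻¹ q.2)) = q
      rw [Equiv.Perm.apply_inv_self]

end OneSidedMarkov
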